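/- arXiv:2004.14187 — 3 statements merged into one kernel-verified Lean document; each statement's English description precedes it below -/
import Mathlib

section
/- The functional J_Ψ is strictly convex on Q_Ψ^+: for any Q_1, Q_2 ∈ Q_Ψ^+ with Q_1 ≠ Q_2 (as elements of 𝒫_{m,n}) and any t ∈ (0,1), one has tQ_1 + (1−t)Q_2 ∈ Q_Ψ^+ and J_Ψ(tQ_1 + (1−t)Q_2) < t J_Ψ(Q_1) + (1−t) J_Ψ(Q_2). -/
open MeasureTheory Matrix Filter
open scoped Real ComplexOrder

/-- Embed a real matrix into the complex matrices. -/
noncomputable def cm {m : ℕ} (A : Matrix (Fin m) (Fin m) ℝ) : Matrix (Fin m) (Fin m) ℂ :=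
  A.map (fun x => (x : ℂ))

/-- Evaluation of the matrix pseudo-polynomial `Q(θ) = ∑_{k=-n}^n C_k e^{i k θ}`. -/
noncomputable def ppEval {m : ℕ} (n : ℕ) (C : ℤ → Matrix (Fin m) (Fin m) ℝ) (θ : ℝ) :
    Matrix (Fin m) (Fin m) ℂ :=
  ∑ k ∈ Finset.Icc (-(n : ℤ)) (n : ℤ), Complex.exp (Complex.I * (k : ℂ) * (θ : ℂ)) • cm (C k)

/-- The truncated periodogram `Φ̂_n(θ) = ∑_{k=-n}^n R_k e^{-i k θ}`. -/
noncomputable def pgram {m : ℕ} (n : ℕ) (R : ℤ → Matrix (Fin m) (Fin m) ℝ) (θ : ℝ) :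
    Matrix (Fin m) (Fin m) ℂ :=
  ∑ k ∈ Finset.Icc (-(n : ℤ)) (n : ℤ), Complex.exp (-(Complex.I * (k : ℂ) * (θ : ℂ))) • cm (R k)

/-- Membership in the space `𝒫_{m,n}` of matrix pseudo-polynomials, described through the
coefficients: symmetry `C_{-k} = C_kᵀ` and vanishing of the coefficients of index `|k| > n`. -/
def IsPP (m n : ℕ) (C : ℤ → Matrix (Fin m) (Fin m) ℝ) : Prop :=
  (∀ k : ℤ, C (-k) = (C k)ᵀ) ∧ ∀ k : ℤ, (n : ℤ) < |k| → C k = 0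

/-- `log det` of a (Hermitian positive definite) complex matrix: the real logarithm of the
real part of the determinant. -/
noncomputable def logdet {m : ℕ} (A : Matrix (Fin m) (Fin m) ℂ) : ℝ :=
  Real.log A.det.re

/-- The group-sparsity functional `h_σ^∞`. -/
noncomputable def hSig {m : ℕ} (n : ℕ) (Ωσ : Finset (Fin m × Fin m))
    (C : ℤ → Matrix (Fin m) (Fin m) ℝ) : ℝ :=
  ∑ p ∈ Finset.univ.filter (fun p : Fin m × Fin m => p ∉ Ωσ ∧ p.1 < p.2),
    max |C 0 p.1 p.2|
      (max (⨆ j ∈ Finset.Icc (1 : ℤ) (n : ℤ), |C j p.1 p.2|)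
           (⨆ j ∈ Finset.Icc (1 : ℤ) (n : ℤ), |C j p.2 p.1|))

/-- The regularized objective functional `J_Ψ`. -/
noncomputable def Jfun {m : ℕ} (n : ℕ) (Ψ : ℝ → Matrix (Fin m) (Fin m) ℂ)
    (R : ℤ → Matrix (Fin m) (Fin m) ℝ) (Ωσ : Finset (Fin m × Fin m)) (lam : ℝ)
    (C : ℤ → Matrix (Fin m) (Fin m) ℝ) : ℝ :=
  (∫ θ in (-π)..π, ((ppEval n C θ * pgram n R θ).trace.re
      - logdet ((Ψ θ)⁻¹ + ppEval n C θ))) / (2 * π) + lam * hSig n Ωσ C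

/-- The approximating functional `J_Ψ^{n'}`, where `Ψ⁻¹ + Q` is replaced by
`Ψ⁻¹ + Q + (1/n') I`. -/
noncomputable def Jreg {m : ℕ} (n : ℕ) (Ψ : ℝ → Matrix (Fin m) (Fin m) ℂ)
    (R : ℤ → Matrix (Fin m) (Fin m) ℝ) (Ωσ : Finset (Fin m × Fin m)) (lam : ℝ)
    (nn : ℕ) (C : ℤ → Matrix (Fin m) (Fin m) ℝ) : ℝ :=
  (∫ θ in (-π)..π, ((ppEval n C θ * pgram n R θ).trace.re
      - logdet ((Ψ θ)⁻¹ + ppEval n C θ + (((nn : ℝ)⁻¹ : ℂ)) • 1))) / (2 * π)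
    + lam * hSig n Ωσ C

/-- The extended functional `J_Ψ^∞`, the (increasing) limit of `J_Ψ^{n'}` as `n' → ∞`,
with values in `ℝ ∪ {±∞}`. -/
noncomputable def Jinf {m : ℕ} (n : ℕ) (Ψ : ℝ → Matrix (Fin m) (Fin m) ℂ)
    (R : ℤ → Matrix (Fin m) (Fin m) ℝ) (Ωσ : Finset (Fin m × Fin m)) (lam : ℝ)
    (C : ℤ → Matrix (Fin m) (Fin m) ℝ) : EReal :=
  ⨆ nn : ℕ, ((Jreg n Ψ R Ωσ lam (nn + 1) C : ℝ) : EReal)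


section
variable {m : ℕ} {A B : Matrix (Fin m) (Fin m) ℂ}
variable {m : ℕ} {A B : Matrix (Fin m) (Fin m) ℂ}
open scoped MatrixOrder

lemma detre_pos (hA : A.PosDef) : 0 < A.det.re := by
  have := hA.det_pos
  rw [Complex.lt_def] at this
  simpa using this.1

lemma det_eq_re (hA : A.PosDef) : A.det = (A.det.re : ℂ) := by
  have := hA.det_pos
  rw [Complex.lt_def] at this
  rw [← Complex.re_add_im A.det, ← this.2]
  simp

lemma pd_conj (hB : B.PosDef) {S : Matrix (Fin m) (Fin m) ℂ} (hS : S.det ≠ 0) :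
    (Sᴴ * B * S).PosDef := by
  refine PosDef.of_dotProduct_mulVec_pos (isHermitian_conjTranspose_mul_mul S hB.1) fun x hx => ?_
  · have hSx : S *ᵥ x ≠ 0 := fun h => hx (Matrix.eq_zero_of_mulVec_eq_zero hS h)
    simpa only [star_mulVec, dotProduct_mulVec, vecMul_vecMul] using hB.dotProduct_mulVec_pos hSx

/-- key concavity lemma for logdet -/
lemma logdet_concave (hA : A.PosDef) (hB : B.PosDef) {t : ℝ} (ht0 : 0 < t) (ht1 : t < 1) :
    t * logdet A + (1 - t) * logdet B ≤ logdet ((t:ℂ) • A + ((1 - t : ℝ) : ℂ) • B) ∧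
    (A ≠ B → t * logdet A + (1 - t) * logdet B < logdet ((t:ℂ) • A + ((1 - t : ℝ) : ℂ) • B)) := by
  classical
  set S := CFC.sqrt A with hSdef
  have hSps : S.PosSemidef := (CFC.sqrt_nonneg A).posSemidef
  have hSH : S.IsHermitian := hSps.1
  have hSS : S * S = A := CFC.sqrt_mul_sqrt_self A hA.posSemidef.nonneg
  have hdetS : S.det ≠ 0 := by
    intro h
    have : A.det = 0 := by rw [← hSS, det_mul, h, zero_mul]
    exact hA.det_pos.ne' this
  have hdetSi : (S⁻¹).det ≠ 0 := by
    rw [det_nonsing_inv, Ring.inverse_eq_inv']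
    exact inv_ne_zero hdetS
  have hSmul : S * S⁻¹ = 1 := mul_nonsing_inv S hdetS.isUnit
  have hSmul' : S⁻¹ * S = 1 := nonsing_inv_mul S hdetS.isUnit
  have hSiH : (S⁻¹)ᴴ = S⁻¹ := by rw [conjTranspose_nonsing_inv, hSH.eq]
  set M := S⁻¹ * B * S⁻¹ with hMdef
  have hMpd : M.PosDef := by
    have := pd_conj hB hdetSi
    rwa [hSiH] at this
  have hBSMS : B = S * M * S := by
    rw [hMdef]
    simp only [← Matrix.mul_assoc]
    rw [hSmul, Matrix.one_mul, Matrix.mul_assoc, hSmul', Matrix.mul_one]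
  set N := (t:ℂ) • (1 : Matrix (Fin m) (Fin m) ℂ) + ((1 - t : ℝ) : ℂ) • M with hNdef
  have hcombo : (t:ℂ) • A + ((1 - t : ℝ) : ℂ) • B = S * N * S := by
    rw [hNdef, hBSMS, ← hSS]
    simp only [Matrix.mul_add, Matrix.add_mul, Matrix.mul_smul, Matrix.smul_mul,
      Matrix.mul_one]
  -- spectral theorem for M
  have hMH : M.IsHermitian := hMpd.1
  set μ := hMH.eigenvalues with hμdef
  set U := (hMH.eigenvectorUnitary : Matrix (Fin m) (Fin m) ℂ) with hUdef
  have hUU : U * star U = 1 := (Unitary.mem_iff.mp hMH.eigenvectorUnitary.2).2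
  have hspec : M = U * diagonal (RCLike.ofReal ∘ μ) * star U := hMH.spectral_theorem
  have hNspec : N = U * diagonal (fun i => ((t + (1 - t) * μ i : ℝ) : ℂ)) * star U := by
    have h1 : (t:ℂ) • (1 : Matrix (Fin m) (Fin m) ℂ) = U * ((t:ℂ) • 1) * star U := by
      rw [Matrix.mul_smul, Matrix.smul_mul, Matrix.mul_one, hUU]
    have h2 : ((1 - t : ℝ) : ℂ) • M
        = U * (((1 - t : ℝ) : ℂ) • diagonal (RCLike.ofReal ∘ μ)) * star U := by
      conv_lhs => rw [hspec]
      rw [mul_smul_comm, smul_mul_assoc]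
    rw [hNdef]
    conv_lhs => rw [h1, h2]
    rw [← Matrix.add_mul, ← Matrix.mul_add]
    congr 2
    rw [← Matrix.diagonal_one, ← Matrix.diagonal_smul, ← Matrix.diagonal_smul,
      Matrix.diagonal_add]
    refine congrArg diagonal (funext fun i => ?_)
    simp only [Pi.smul_apply, Function.comp_apply, smul_eq_mul, Pi.add_apply]
    push_cast
    ring_nf
    rfl
  -- determinant identities
  have hdetU : U.det * (star U).det = 1 := by rw [← det_mul, hUU, det_one]
  have hdetA : A.det = S.det * S.det := by rw [← hSS, det_mul]
  have μpos : ∀ i, 0 < μ i := fun i => hMpd.eigenvalues_pos i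
  have facpos : ∀ i, 0 < t + (1 - t) * μ i := fun i =>
    add_pos_of_pos_of_nonneg ht0 (mul_nonneg (by linarith) (μpos i).le)
  have hdetN : N.det = ((∏ i, (t + (1 - t) * μ i) : ℝ) : ℂ) := by
    rw [hNspec, det_mul, det_mul, mul_comm U.det, mul_assoc, hdetU, mul_one, det_diagonal]
    push_cast
    rfl
  have hdetM : M.det = ((∏ i, μ i : ℝ) : ℂ) := by
    rw [hMH.det_eq_prod_eigenvalues]
    push_cast
    rfl
  have hdetB : B.det = A.det * M.det := by
    rw [hBSMS, det_mul, det_mul, hdetA]; ring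
  have hdetCombo : ((t:ℂ) • A + ((1 - t : ℝ) : ℂ) • B).det = A.det * N.det := by
    rw [hcombo, det_mul, det_mul, hdetA]; ring
  set a := A.det.re with hadef
  have ha : 0 < a := detre_pos hA
  have hAre : A.det = (a : ℂ) := det_eq_re hA
  have hreB : B.det.re = a * ∏ i, μ i := by
    rw [hdetB, hAre, hdetM, ← Complex.ofReal_mul, Complex.ofReal_re]
  have hreCombo : ((t:ℂ) • A + ((1 - t : ℝ) : ℂ) • B).det.re
      = a * ∏ i, (t + (1 - t) * μ i) := by
    rw [hdetCombo, hAre, hdetN, ← Complex.ofReal_mul, Complex.ofReal_re]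
  have hlogB : logdet B = Real.log a + ∑ i, Real.log (μ i) := by
    rw [logdet, hreB, Real.log_mul ha.ne' (Finset.prod_pos (fun i _ => μpos i)).ne',
      Real.log_prod (fun i _ => (μpos i).ne')]
  have hlogCombo : logdet ((t:ℂ) • A + ((1 - t : ℝ) : ℂ) • B)
      = Real.log a + ∑ i, Real.log (t + (1 - t) * μ i) := by
    rw [logdet, hreCombo, Real.log_mul ha.ne' (Finset.prod_pos (fun i _ => facpos i)).ne',
      Real.log_prod (fun i _ => (facpos i).ne')]
  have hlogA : logdet A = Real.log a := rfl
  -- concavity of log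
  have hle : ∀ i : Fin m, (1 - t) * Real.log (μ i) ≤ Real.log (t + (1 - t) * μ i) := by
    intro i
    have := (strictConcaveOn_log_Ioi.concaveOn).2 (Set.mem_Ioi.mpr one_pos)
      (Set.mem_Ioi.mpr (μpos i)) ht0.le (by linarith : (0:ℝ) ≤ 1 - t)
      (by ring : t + (1 - t) = 1)
    simpa [Real.log_one, smul_eq_mul, mul_one] using this
  have hsumle : (1 - t) * ∑ i, Real.log (μ i) ≤ ∑ i, Real.log (t + (1 - t) * μ i) := by
    rw [Finset.mul_sum]
    exact Finset.sum_le_sum fun i _ => hle i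
  constructor
  · rw [hlogA, hlogB, hlogCombo]
    nlinarith [hsumle]
  · intro hne
    have hM1 : M ≠ 1 := by
      intro h
      apply hne
      rw [hBSMS, h, Matrix.mul_one, hSS]
    have hex : ∃ i, μ i ≠ 1 := by
      by_contra h
      push_neg at h
      apply hM1
      rw [hspec]
      have : diagonal (RCLike.ofReal ∘ μ) = (1 : Matrix (Fin m) (Fin m) ℂ) := by
        rw [← Matrix.diagonal_one]
        refine congrArg diagonal (funext fun i => ?_)
        simp [h i]
      rw [this, Matrix.mul_one, hUU]
    obtain ⟨i₀, hi₀⟩ := hex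
    have hstrict : (1 - t) * Real.log (μ i₀) < Real.log (t + (1 - t) * μ i₀) := by
      have := strictConcaveOn_log_Ioi.2 (Set.mem_Ioi.mpr one_pos)
        (Set.mem_Ioi.mpr (μpos i₀)) (Ne.symm hi₀) ht0 (by linarith : (0:ℝ) < 1 - t)
        (by ring : t + (1 - t) = 1)
      simpa [Real.log_one, smul_eq_mul, mul_one] using this
    have hsumlt : (1 - t) * ∑ i, Real.log (μ i) < ∑ i, Real.log (t + (1 - t) * μ i) := by
      rw [Finset.mul_sum]
      exact Finset.sum_lt_sum (fun i _ => hle i) ⟨i₀, Finset.mem_univ _, hstrict⟩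
    rw [hlogA, hlogB, hlogCombo]
    nlinarith [hsumlt]
end

lemma cm_add {m : ℕ} (A B : Matrix (Fin m) (Fin m) ℝ) : cm (A + B) = cm A + cm B := by
  ext i j; simp [cm]

lemma cm_smul {m : ℕ} (t : ℝ) (A : Matrix (Fin m) (Fin m) ℝ) :
    cm (t • A) = (t : ℂ) • cm A := by
  ext i j; simp [cm]

lemma ppEval_combo {m : ℕ} (n : ℕ) (C₁ C₂ : ℤ → Matrix (Fin m) (Fin m) ℝ) (t : ℝ) (θ : ℝ) :
    ppEval n (fun k => t • C₁ k + (1 - t) • C₂ k) θ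
      = (t : ℂ) • ppEval n C₁ θ + ((1 - t : ℝ) : ℂ) • ppEval n C₂ θ := by
  unfold ppEval
  rw [Finset.smul_sum, Finset.smul_sum, ← Finset.sum_add_distrib]
  refine Finset.sum_congr rfl fun k _ => ?_
  rw [cm_add, cm_smul, cm_smul, smul_add]
  rw [smul_comm ((t:ℂ)) , smul_comm (((1 - t : ℝ):ℂ))]

lemma ppEval_sub {m : ℕ} (n : ℕ) (C₁ C₂ : ℤ → Matrix (Fin m) (Fin m) ℝ) (θ : ℝ) :
    ppEval n (fun k => C₁ k - C₂ k) θ = ppEval n C₁ θ - ppEval n C₂ θ := by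
  unfold ppEval
  rw [← Finset.sum_sub_distrib]
  refine Finset.sum_congr rfl fun k _ => ?_
  rw [← smul_sub]
  congr 1
  ext i j; simp [cm]

-- continuity of ppEval
lemma ppEval_continuous {m : ℕ} (n : ℕ) (C : ℤ → Matrix (Fin m) (Fin m) ℝ) :
    Continuous (fun θ => ppEval n C θ) := by
  unfold ppEval
  refine continuous_finset_sum _ fun k _ => ?_
  exact (Complex.continuous_exp.comp (by continuity)).smul continuous_const

lemma integral_exp_int (j : ℤ) :
    (∫ θ in (-π)..π, Complex.exp (Complex.I * (j : ℂ) * (θ : ℂ)))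
      = if j = 0 then (2 * π : ℂ) else 0 := by
  split_ifs with hj
  · subst hj
    simp only [Int.cast_zero, mul_zero, zero_mul, Complex.exp_zero]
    rw [intervalIntegral.integral_const]
    rw [sub_neg_eq_add, Complex.real_smul]
    push_cast
    ring
  · have hc : (Complex.I * (j : ℂ)) ≠ 0 :=
      mul_ne_zero Complex.I_ne_zero (Int.cast_ne_zero.mpr hj)
    have : ∀ θ : ℝ, Complex.I * (j : ℂ) * (θ : ℂ) = (Complex.I * (j : ℂ)) * (θ : ℂ) :=
      fun θ => by ring
    rw [show (fun θ : ℝ => Complex.exp (Complex.I * (j:ℂ) * (θ:ℂ)))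
        = fun θ : ℝ => Complex.exp ((Complex.I * (j:ℂ)) * (θ:ℂ)) from rfl]
    rw [integral_exp_mul_complex hc]
    have hper : Complex.exp ((Complex.I * (j:ℂ)) * (π:ℂ))
        = Complex.exp ((Complex.I * (j:ℂ)) * ((-π : ℝ):ℂ)) := by
      have harg : (Complex.I * (j:ℂ)) * (π:ℂ)
          = (Complex.I * (j:ℂ)) * ((-π : ℝ):ℂ) + (j : ℂ) * (2 * (π:ℂ) * Complex.I) := by
        push_cast
        ring
      rw [harg, Complex.exp_add, Complex.exp_int_mul_two_pi_mul_I, mul_one]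
    rw [hper, sub_self, zero_div]

lemma exists_theta_ne {m n : ℕ} (D : ℤ → Matrix (Fin m) (Fin m) ℝ)
    {l : ℤ} (hl : l ∈ Finset.Icc (-(n:ℤ)) (n:ℤ)) {i j : Fin m} (hD : D l i j ≠ 0) :
    ∃ θ ∈ Set.Icc (-π) π, ppEval n D θ ≠ 0 := by
  by_contra h
  push_neg at h
  -- the scalar function
  set g : ℝ → ℂ := fun θ =>
    Complex.exp (-(Complex.I * (l:ℂ) * (θ:ℂ))) * (ppEval n D θ i j) with hgdef
  have hg0 : ∀ θ ∈ Set.Icc (-π) π, g θ = 0 := fun θ hθ => by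
    rw [hgdef]; simp [h θ hθ]
  have hint0 : (∫ θ in (-π)..π, g θ) = 0 := by
    rw [intervalIntegral.integral_congr (g := fun _ => (0:ℂ)) ?_, intervalIntegral.integral_const, smul_zero]
    intro θ hθ
    rw [Set.uIcc_of_le (by linarith [Real.pi_pos] : (-π) ≤ π)] at hθ
    exact hg0 θ hθ
  -- expand g as a finite sum
  have hgsum : ∀ θ : ℝ, g θ = ∑ k ∈ Finset.Icc (-(n:ℤ)) (n:ℤ),
      Complex.exp (Complex.I * ((k - l : ℤ) : ℂ) * (θ:ℂ)) * (D k i j : ℂ) := by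
    intro θ
    rw [hgdef]
    simp only [ppEval, Matrix.sum_apply, Matrix.smul_apply, Finset.mul_sum]
    refine Finset.sum_congr rfl fun k _ => ?_
    rw [smul_eq_mul, ← mul_assoc, ← Complex.exp_add]
    have : -(Complex.I * (l:ℂ) * (θ:ℂ)) + Complex.I * (k:ℂ) * (θ:ℂ)
        = Complex.I * ((k - l : ℤ) : ℂ) * (θ:ℂ) := by push_cast; ring
    rw [this]
    rfl
  have hint : (∫ θ in (-π)..π, g θ) = (2 * π : ℂ) * (D l i j : ℂ) := by
    rw [intervalIntegral.integral_congr (g := fun θ => ∑ k ∈ Finset.Icc (-(n:ℤ)) (n:ℤ),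
      Complex.exp (Complex.I * ((k - l : ℤ) : ℂ) * (θ:ℂ)) * (D k i j : ℂ))
      (fun θ _ => hgsum θ)]
    rw [intervalIntegral.integral_finset_sum]
    · rw [Finset.sum_eq_single l]
      · rw [intervalIntegral.integral_mul_const, sub_self, integral_exp_int 0,
          if_pos rfl]
      · intro k hk hkl
        rw [intervalIntegral.integral_mul_const, integral_exp_int (k - l),
          if_neg (sub_ne_zero.mpr hkl), zero_mul]
      · intro hli
        exact absurd hl hli
    · intro k _
      apply Continuous.intervalIntegrable
      exact (Complex.continuous_exp.comp (by continuity)).mul continuous_const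
  rw [hint0] at hint
  have : (D l i j : ℂ) ≠ 0 := by exact_mod_cast hD
  have h2pi : (2 * π : ℂ) ≠ 0 := by
    simp only [ne_eq, mul_eq_zero]
    push_neg
    exact ⟨two_ne_zero, Complex.ofReal_ne_zero.mpr Real.pi_ne_zero⟩
  exact (mul_ne_zero h2pi this) hint.symm

lemma real_biSup_le {s : Finset ℤ} {f : ℤ → ℝ} {a : ℝ} (ha : 0 ≤ a)
    (h : ∀ j ∈ s, f j ≤ a) : (⨆ j ∈ s, f j) ≤ a := by
  refine Real.iSup_le (fun j => Real.iSup_le (fun hj => h j hj) ha) ha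

lemma real_le_biSup {s : Finset ℤ} {f : ℤ → ℝ} (hf : ∀ j, 0 ≤ f j) {j : ℤ}
    (hj : j ∈ s) : f j ≤ ⨆ k ∈ s, f k := by
  have hb : BddAbove (Set.range fun k => ⨆ _ : k ∈ s, f k) := by
    refine ⟨∑ k ∈ s, f k, ?_⟩
    rintro x ⟨k, rfl⟩
    refine Real.iSup_le (fun hk => Finset.single_le_sum (fun j _ => hf j) hk)
      (Finset.sum_nonneg fun j _ => hf j)
  calc f j = ⨆ _ : j ∈ s, f j := (ciSup_pos (p := j ∈ s) (f := fun _ => f j) hj).symm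
  _ ≤ ⨆ k ∈ s, f k := le_ciSup hb j

lemma biSup_nonneg {s : Finset ℤ} {f : ℤ → ℝ} (hf : ∀ j, 0 ≤ f j) :
    0 ≤ ⨆ k ∈ s, f k := by
  by_cases hs : ∃ j, j ∈ s
  · obtain ⟨j, hj⟩ := hs
    exact le_trans (hf j) (real_le_biSup hf hj)
  · push_neg at hs
    have : ∀ k : ℤ, (⨆ _ : k ∈ s, f k) = 0 := fun k => by
      rw [ciSup_neg (hs k), Real.sSup_empty]
    simp only [this]
    rw [ciSup_const]

lemma hSig_nonneg_term {m : ℕ} (n : ℕ) (C : ℤ → Matrix (Fin m) (Fin m) ℝ)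
    (p : Fin m × Fin m) :
    0 ≤ max |C 0 p.1 p.2|
      (max (⨆ j ∈ Finset.Icc (1 : ℤ) (n : ℤ), |C j p.1 p.2|)
           (⨆ j ∈ Finset.Icc (1 : ℤ) (n : ℤ), |C j p.2 p.1|)) :=
  le_trans (abs_nonneg _) (le_max_left _ _)

lemma hSig_convex {m : ℕ} (n : ℕ) (Ωσ : Finset (Fin m × Fin m))
    (C₁ C₂ : ℤ → Matrix (Fin m) (Fin m) ℝ) {t : ℝ} (ht0 : 0 ≤ t) (ht1 : t ≤ 1) :
    hSig n Ωσ (fun k => t • C₁ k + (1 - t) • C₂ k)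
      ≤ t * hSig n Ωσ C₁ + (1 - t) * hSig n Ωσ C₂ := by
  unfold hSig
  rw [Finset.mul_sum, Finset.mul_sum, ← Finset.sum_add_distrib]
  refine Finset.sum_le_sum fun p _ => ?_
  set T₁ := max |C₁ 0 p.1 p.2|
      (max (⨆ j ∈ Finset.Icc (1 : ℤ) (n : ℤ), |C₁ j p.1 p.2|)
           (⨆ j ∈ Finset.Icc (1 : ℤ) (n : ℤ), |C₁ j p.2 p.1|)) with hT₁
  set T₂ := max |C₂ 0 p.1 p.2|
      (max (⨆ j ∈ Finset.Icc (1 : ℤ) (n : ℤ), |C₂ j p.1 p.2|)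
           (⨆ j ∈ Finset.Icc (1 : ℤ) (n : ℤ), |C₂ j p.2 p.1|)) with hT₂
  have hT₁0 : 0 ≤ T₁ := hSig_nonneg_term n C₁ p
  have hT₂0 : 0 ≤ T₂ := hSig_nonneg_term n C₂ p
  have hRHS : 0 ≤ t * T₁ + (1 - t) * T₂ :=
    add_nonneg (mul_nonneg ht0 hT₁0) (mul_nonneg (by linarith) hT₂0)
  have key : ∀ (j : ℤ) (a b : Fin m),
      |(t • C₁ j + (1 - t) • C₂ j) a b| ≤ t * |C₁ j a b| + (1 - t) * |C₂ j a b| := by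
    intro j a b
    simp only [Matrix.add_apply, Matrix.smul_apply, smul_eq_mul]
    calc |t * C₁ j a b + (1 - t) * C₂ j a b|
        ≤ |t * C₁ j a b| + |(1 - t) * C₂ j a b| := abs_add_le _ _
    _ = t * |C₁ j a b| + (1 - t) * |C₂ j a b| := by
        rw [abs_mul, abs_mul, abs_of_nonneg ht0, abs_of_nonneg (by linarith : (0:ℝ) ≤ 1 - t)]
  have h1 : ∀ j : ℤ, |C₁ j p.1 p.2| ≤ T₁ ∧ |C₂ j p.1 p.2| ≤ T₂ → True := fun _ _ => trivial
  refine max_le ?_ (max_le ?_ ?_)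
  · refine le_trans (key 0 p.1 p.2) ?_
    have := le_max_left |C₁ 0 p.1 p.2|
      (max (⨆ j ∈ Finset.Icc (1 : ℤ) (n : ℤ), |C₁ j p.1 p.2|)
           (⨆ j ∈ Finset.Icc (1 : ℤ) (n : ℤ), |C₁ j p.2 p.1|))
    have h2 := le_max_left |C₂ 0 p.1 p.2|
      (max (⨆ j ∈ Finset.Icc (1 : ℤ) (n : ℤ), |C₂ j p.1 p.2|)
           (⨆ j ∈ Finset.Icc (1 : ℤ) (n : ℤ), |C₂ j p.2 p.1|))
    exact add_le_add (mul_le_mul_of_nonneg_left this ht0)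
      (mul_le_mul_of_nonneg_left h2 (by linarith))
  · refine real_biSup_le hRHS fun j hj => ?_
    refine le_trans (key j p.1 p.2) ?_
    have b1 : |C₁ j p.1 p.2| ≤ T₁ := le_trans
      (le_trans (real_le_biSup (f := fun k => |C₁ k p.1 p.2|) (fun k => abs_nonneg _) hj)
        (le_max_left _ _)) (le_max_right _ _)
    have b2 : |C₂ j p.1 p.2| ≤ T₂ := le_trans
      (le_trans (real_le_biSup (f := fun k => |C₂ k p.1 p.2|) (fun k => abs_nonneg _) hj)
        (le_max_left _ _)) (le_max_right _ _)
    exact add_le_add (mul_le_mul_of_nonneg_left b1 ht0)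
      (mul_le_mul_of_nonneg_left b2 (by linarith))
  · refine real_biSup_le hRHS fun j hj => ?_
    refine le_trans (key j p.2 p.1) ?_
    have b1 : |C₁ j p.2 p.1| ≤ T₁ := le_trans
      (le_trans (real_le_biSup (f := fun k => |C₁ k p.2 p.1|) (fun k => abs_nonneg _) hj)
        (le_max_right _ _)) (le_max_right _ _)
    have b2 : |C₂ j p.2 p.1| ≤ T₂ := le_trans
      (le_trans (real_le_biSup (f := fun k => |C₂ k p.2 p.1|) (fun k => abs_nonneg _) hj)
        (le_max_right _ _)) (le_max_right _ _)
    exact add_le_add (mul_le_mul_of_nonneg_left b1 ht0)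
      (mul_le_mul_of_nonneg_left b2 (by linarith))

lemma posDef_smul {m : ℕ} {A : Matrix (Fin m) (Fin m) ℂ} (hA : A.PosDef) {t : ℝ} (ht : 0 < t) :
    ((t:ℂ) • A).PosDef := by
  refine PosDef.of_dotProduct_mulVec_pos ?_ fun x hx => ?_
  · unfold Matrix.IsHermitian
    rw [conjTranspose_smul, hA.1.eq]
    norm_num
  · rw [Matrix.smul_mulVec, dotProduct_smul]
    exact mul_pos (by exact_mod_cast ht) (hA.dotProduct_mulVec_pos hx)

lemma pgram_continuous {m : ℕ} (n : ℕ) (R : ℤ → Matrix (Fin m) (Fin m) ℝ) :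
    Continuous (fun θ => pgram n R θ) := by
  unfold pgram
  refine continuous_finset_sum _ fun k _ => ?_
  exact (Complex.continuous_exp.comp (by continuity)).smul continuous_const

lemma psi_inv_contOn {m : ℕ} {Ψ : ℝ → Matrix (Fin m) (Fin m) ℂ}
    (hΨcont : ContinuousOn Ψ (Set.Icc (-π) π))
    (hΨpd : ∀ θ ∈ Set.Icc (-π) π, (Ψ θ).PosDef) :
    ContinuousOn (fun θ => (Ψ θ)⁻¹) (Set.Icc (-π) π) := by
  have hdet : ContinuousOn (fun θ => (Ψ θ).det) (Set.Icc (-π) π) :=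
    (continuous_id.matrix_det).comp_continuousOn hΨcont
  have hadj : ContinuousOn (fun θ => (Ψ θ).adjugate) (Set.Icc (-π) π) :=
    (continuous_id.matrix_adjugate).comp_continuousOn hΨcont
  have hne : ∀ θ ∈ Set.Icc (-π) π, (Ψ θ).det ≠ 0 := fun θ hθ => (hΨpd θ hθ).det_pos.ne'
  have : ContinuousOn (fun θ => ((Ψ θ).det)⁻¹ • (Ψ θ).adjugate) (Set.Icc (-π) π) :=
    (hdet.inv₀ hne).smul hadj
  refine this.congr fun θ _ => ?_
  rw [Matrix.inv_def, Ring.inverse_eq_inv']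

lemma integrand_contOn {m : ℕ} (n : ℕ) {Ψ : ℝ → Matrix (Fin m) (Fin m) ℂ}
    (hΨcont : ContinuousOn Ψ (Set.Icc (-π) π))
    (hΨpd : ∀ θ ∈ Set.Icc (-π) π, (Ψ θ).PosDef)
    (R : ℤ → Matrix (Fin m) (Fin m) ℝ)
    (C : ℤ → Matrix (Fin m) (Fin m) ℝ)
    (hCpos : ∀ θ ∈ Set.Icc (-π) π, ((Ψ θ)⁻¹ + ppEval n C θ).PosDef) :
    ContinuousOn (fun θ => (ppEval n C θ * pgram n R θ).trace.re
      - logdet ((Ψ θ)⁻¹ + ppEval n C θ)) (Set.Icc (-π) π) := by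
  have h1 : Continuous (fun θ => (ppEval n C θ * pgram n R θ).trace.re) :=
    Complex.continuous_re.comp (((ppEval_continuous n C).matrix_mul
      (pgram_continuous n R)).matrix_trace)
  have hM : ContinuousOn (fun θ => (Ψ θ)⁻¹ + ppEval n C θ) (Set.Icc (-π) π) :=
    (psi_inv_contOn hΨcont hΨpd).add (ppEval_continuous n C).continuousOn
  have hdetre : ContinuousOn (fun θ => ((Ψ θ)⁻¹ + ppEval n C θ).det.re) (Set.Icc (-π) π) :=
    (Complex.continuous_re.comp continuous_id.matrix_det).comp_continuousOn hM
  have h2 : ContinuousOn (fun θ => logdet ((Ψ θ)⁻¹ + ppEval n C θ)) (Set.Icc (-π) π) :=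
    hdetre.log fun θ hθ => (detre_pos (hCpos θ hθ)).ne'
  exact (h1.continuousOn).sub h2


/-- The functional `J_Ψ` is strictly convex on `Q_Ψ^+`: for distinct
`Q₁, Q₂ ∈ Q_Ψ^+` and `t ∈ (0,1)`, the combination `tQ₁ + (1−t)Q₂` lies in `Q_Ψ^+` and
`J_Ψ(tQ₁ + (1−t)Q₂) < t J_Ψ(Q₁) + (1−t) J_Ψ(Q₂)`. -/
theorem stmt8 (m n : ℕ) (hm : 1 ≤ m) (hn : 1 ≤ n)
    (Ψ : ℝ → Matrix (Fin m) (Fin m) ℂ)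
    (hΨcont : ContinuousOn Ψ (Set.Icc (-π) π))
    (hΨpd : ∀ θ ∈ Set.Icc (-π) π, (Ψ θ).PosDef)
    (R : ℤ → Matrix (Fin m) (Fin m) ℝ)
    (hRsym : ∀ k : ℤ, R (-k) = (R k)ᵀ)
    (Ωσ : Finset (Fin m × Fin m))
    (hΩsym : ∀ p ∈ Ωσ, (p.2, p.1) ∈ Ωσ)
    (hΩdiag : ∀ i : Fin m, (i, i) ∈ Ωσ)
    (lam : ℝ) (hlam : 0 < lam)
    (C₁ C₂ : ℤ → Matrix (Fin m) (Fin m) ℝ)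
    (hC₁ : IsPP m n C₁)
    (hC₁pos : ∀ θ ∈ Set.Icc (-π) π, ((Ψ θ)⁻¹ + ppEval n C₁ θ).PosDef)
    (hC₂ : IsPP m n C₂)
    (hC₂pos : ∀ θ ∈ Set.Icc (-π) π, ((Ψ θ)⁻¹ + ppEval n C₂ θ).PosDef)
    (hne : C₁ ≠ C₂)
    (t : ℝ) (ht0 : 0 < t) (ht1 : t < 1) :
    (IsPP m n (fun k => t • C₁ k + (1 - t) • C₂ k) ∧
      ∀ θ ∈ Set.Icc (-π) π,
        ((Ψ θ)⁻¹ + ppEval n (fun k => t • C₁ k + (1 - t) • C₂ k) θ).PosDef) ∧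
    Jfun n Ψ R Ωσ lam (fun k => t • C₁ k + (1 - t) • C₂ k)
      < t * Jfun n Ψ R Ωσ lam C₁ + (1 - t) * Jfun n Ψ R Ωσ lam C₂ := by
  have hπ : (0:ℝ) < π := Real.pi_pos
  have hab : -π < π := by linarith
  set Qc : ℤ → Matrix (Fin m) (Fin m) ℝ := fun k => t • C₁ k + (1 - t) • C₂ k with hQcdef
  -- combination identity for the matrices
  have hcomboM : ∀ θ : ℝ, (Ψ θ)⁻¹ + ppEval n Qc θ
      = (t:ℂ) • ((Ψ θ)⁻¹ + ppEval n C₁ θ)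
        + ((1 - t : ℝ):ℂ) • ((Ψ θ)⁻¹ + ppEval n C₂ θ) := by
    intro θ
    rw [hQcdef, ppEval_combo, smul_add, smul_add]
    have hX : (t:ℂ) • (Ψ θ)⁻¹ + ((1 - t : ℝ):ℂ) • (Ψ θ)⁻¹ = (Ψ θ)⁻¹ := by
      rw [← add_smul]
      norm_num
    conv_lhs => rw [← hX]
    abel
  -- positive definiteness of the combination
  have hPD : ∀ θ ∈ Set.Icc (-π) π, ((Ψ θ)⁻¹ + ppEval n Qc θ).PosDef := by
    intro θ hθ
    rw [hcomboM θ]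
    exact (posDef_smul (hC₁pos θ hθ) ht0).add
      (posDef_smul (t := 1 - t) (hC₂pos θ hθ) (by linarith))
  -- IsPP
  have hIsPP : IsPP m n Qc := by
    constructor
    · intro k
      show t • C₁ (-k) + (1 - t) • C₂ (-k) = (t • C₁ k + (1 - t) • C₂ k)ᵀ
      rw [Matrix.transpose_add, Matrix.transpose_smul, Matrix.transpose_smul,
        ← hC₁.1, ← hC₂.1]
    · intro k hk
      show t • C₁ k + (1 - t) • C₂ k = 0
      rw [hC₁.2 k hk, hC₂.2 k hk]
      simp
  refine ⟨⟨hIsPP, hPD⟩, ?_⟩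
  -- the integrand functions
  set f : (ℤ → Matrix (Fin m) (Fin m) ℝ) → ℝ → ℝ := fun C θ =>
    (ppEval n C θ * pgram n R θ).trace.re - logdet ((Ψ θ)⁻¹ + ppEval n C θ) with hfdef
  -- trace linearity
  have htr : ∀ θ : ℝ, (ppEval n Qc θ * pgram n R θ).trace.re
      = t * (ppEval n C₁ θ * pgram n R θ).trace.re
        + (1 - t) * (ppEval n C₂ θ * pgram n R θ).trace.re := by
    intro θ
    rw [hQcdef, ppEval_combo, Matrix.add_mul, smul_mul_assoc, smul_mul_assoc,
      trace_add, trace_smul, trace_smul]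
    simp only [smul_eq_mul, Complex.add_re, Complex.mul_re, Complex.ofReal_re,
      Complex.ofReal_im, zero_mul, sub_zero]
  -- pointwise inequality
  have hptle : ∀ θ ∈ Set.Icc (-π) π, f Qc θ ≤ t * f C₁ θ + (1 - t) * f C₂ θ := by
    intro θ hθ
    have hld := (logdet_concave (hC₁pos θ hθ) (hC₂pos θ hθ) ht0 ht1).1
    rw [← hcomboM θ] at hld
    simp only [hfdef]
    have := htr θ
    linarith
  -- the point of strict inequality
  obtain ⟨l, hl, i, j, hij⟩ : ∃ l, l ∈ Finset.Icc (-(n:ℤ)) (n:ℤ) ∧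
      ∃ i j : Fin m, (C₁ l - C₂ l) i j ≠ 0 := by
    obtain ⟨l, hl⟩ := Function.ne_iff.mp hne
    have hlmem : l ∈ Finset.Icc (-(n:ℤ)) (n:ℤ) := by
      by_contra hmem
      rw [Finset.mem_Icc] at hmem
      have : (n:ℤ) < |l| := by
        rw [← not_le, abs_le]
        exact hmem
      exact hl ((hC₁.2 l this).trans (hC₂.2 l this).symm)
    refine ⟨l, hlmem, ?_⟩
    by_contra h
    push_neg at h
    apply hl
    ext a b
    have := h a b
    rw [Matrix.sub_apply] at this
    linarith [this]
  obtain ⟨θ₀, hθ₀, hθ₀ne⟩ := exists_theta_ne (fun k => C₁ k - C₂ k) hl hij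
  have hABne : ((Ψ θ₀)⁻¹ + ppEval n C₁ θ₀) ≠ ((Ψ θ₀)⁻¹ + ppEval n C₂ θ₀) := by
    intro h
    apply hθ₀ne
    rw [ppEval_sub, sub_eq_zero]
    exact add_left_cancel h
  have hptlt : f Qc θ₀ < t * f C₁ θ₀ + (1 - t) * f C₂ θ₀ := by
    have hld := (logdet_concave (hC₁pos θ₀ hθ₀) (hC₂pos θ₀ hθ₀) ht0 ht1).2 hABne
    rw [← hcomboM θ₀] at hld
    simp only [hfdef]
    have := htr θ₀
    linarith
  -- continuity
  have hfc : ContinuousOn (f Qc) (Set.Icc (-π) π) :=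
    integrand_contOn n hΨcont hΨpd R Qc hPD
  have hf1 : ContinuousOn (f C₁) (Set.Icc (-π) π) :=
    integrand_contOn n hΨcont hΨpd R C₁ hC₁pos
  have hf2 : ContinuousOn (f C₂) (Set.Icc (-π) π) :=
    integrand_contOn n hΨcont hΨpd R C₂ hC₂pos
  have hgc : ContinuousOn (fun θ => t * f C₁ θ + (1 - t) * f C₂ θ) (Set.Icc (-π) π) :=
    ((continuousOn_const.mul hf1).add (continuousOn_const.mul hf2))
  -- the strict integral inequality
  have hIlt : (∫ θ in (-π)..π, f Qc θ)
      < ∫ θ in (-π)..π, (t * f C₁ θ + (1 - t) * f C₂ θ) :=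
    intervalIntegral.integral_lt_integral_of_continuousOn_of_le_of_exists_lt hab hfc hgc
      (fun x hx => hptle x ⟨hx.1.le, hx.2⟩) ⟨θ₀, hθ₀, hptlt⟩
  have hint1 : IntervalIntegrable (f C₁) volume (-π) π := hf1.intervalIntegrable_of_Icc hab.le
  have hint2 : IntervalIntegrable (f C₂) volume (-π) π := hf2.intervalIntegrable_of_Icc hab.le
  have hsplit : (∫ θ in (-π)..π, (t * f C₁ θ + (1 - t) * f C₂ θ))
      = t * (∫ θ in (-π)..π, f C₁ θ) + (1 - t) * (∫ θ in (-π)..π, f C₂ θ) := by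
    rw [intervalIntegral.integral_add (hint1.const_mul t) (hint2.const_mul (1 - t)),
      intervalIntegral.integral_const_mul, intervalIntegral.integral_const_mul]
  rw [hsplit] at hIlt
  -- hSig inequality
  have hhs : hSig n Ωσ Qc ≤ t * hSig n Ωσ C₁ + (1 - t) * hSig n Ωσ C₂ :=
    hSig_convex n Ωσ C₁ C₂ ht0.le ht1.le
  -- final arithmetic
  simp only [Jfun]
  set F := ∫ θ in (-π)..π, f Qc θ with hF
  set I₁ := ∫ θ in (-π)..π, f C₁ θ with hI₁
  set I₂ := ∫ θ in (-π)..π, f C₂ θ with hI₂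
  set h₀ := hSig n Ωσ Qc
  set h₁ := hSig n Ωσ C₁
  set h₂ := hSig n Ωσ C₂
  have h2π : (0:ℝ) < 2 * π := by linarith
  have hr : (0:ℝ) < (2 * π)⁻¹ := inv_pos.mpr h2π
  have hd : F / (2 * π) < t * (I₁ / (2 * π)) + (1 - t) * (I₂ / (2 * π)) := by
    rw [div_eq_mul_inv, div_eq_mul_inv, div_eq_mul_inv]
    calc F * (2 * π)⁻¹ < (t * I₁ + (1 - t) * I₂) * (2 * π)⁻¹ :=
      mul_lt_mul_of_pos_right hIlt hr
    _ = t * (I₁ * (2 * π)⁻¹) + (1 - t) * (I₂ * (2 * π)⁻¹) := by ring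
  have hlh : lam * h₀ ≤ t * (lam * h₁) + (1 - t) * (lam * h₂) := by
    calc lam * h₀ ≤ lam * (t * h₁ + (1 - t) * h₂) :=
      mul_le_mul_of_nonneg_left hhs hlam.le
    _ = t * (lam * h₁) + (1 - t) * (lam * h₂) := by ring
  calc F / (2 * π) + lam * h₀
      < (t * (I₁ / (2 * π)) + (1 - t) * (I₂ / (2 * π)))
        + (t * (lam * h₁) + (1 - t) * (lam * h₂)) := by linarith
  _ = t * (I₁ / (2 * π) + lam * h₁) + (1 - t) * (I₂ / (2 * π) + lam * h₂) := by ring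
end

section
/- Divergence of the trace of the inverse at the boundary: let M : [-π,π] → ℂ^{m×m} be a function whose entries are rational in e^{iθ} (each entry M_{ij}(θ) = p_{ij}(e^{iθ})/q_{ij}(e^{iθ}) for complex polynomials with q_{ij} nonvanishing on the unit circle), such that M(θ) is Hermitian positive semidefinite for every θ, M(θ_0) is singular for some θ_0 ∈ [-π,π], and det M(θ) is not identically zero. Then M(θ) is invertible for all but finitely many θ and ∫_{-π}^{π} tr(M(θ)^{-1}) dθ = +∞ (as a Lebesgue integral of the nonnegative function θ ↦ tr(M(θ)^{-1}), defined wherever M(θ) is invertible). -/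
open MeasureTheory Matrix
open scoped Real ComplexOrder

section aux
open MeasureTheory Set

lemma L1 {c : ℝ} (hc : 0 < c) : ∫⁻ x in Ioc (0:ℝ) 1, ENNReal.ofReal (c / x) = ⊤ := by
  by_contra h
  have hmeas : Measurable fun x : ℝ => c / x := measurable_const.div measurable_id
  have hint : IntegrableOn (fun x => c / x) (Ioc (0:ℝ) 1) := by
    refine ⟨hmeas.aestronglyMeasurable.restrict, ?_⟩
    rw [hasFiniteIntegral_iff_norm]
    have : ∫⁻ x in Ioc (0:ℝ) 1, ENNReal.ofReal ‖c / x‖ = ∫⁻ x in Ioc (0:ℝ) 1, ENNReal.ofReal (c / x) := by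
      refine setLIntegral_congr_fun measurableSet_Ioc (fun x hx => ?_)
      rw [Real.norm_of_nonneg (div_nonneg hc.le hx.1.le)]
    rw [this]
    exact lt_top_iff_ne_top.2 h
  have hint2 : IntegrableOn (fun x => x ^ (-1:ℝ)) (Ioo (0:ℝ) 1) := by
    have h3 : IntegrableOn (fun x => c⁻¹ * (c / x)) (Ioo (0:ℝ) 1) :=
      (hint.mono_set Ioo_subset_Ioc_self).const_mul _
    refine h3.congr_fun (fun x hx => ?_) measurableSet_Ioo
    rw [Real.rpow_neg_one]
    field_simp
  have := (intervalIntegral.integrableOn_Ioo_rpow_iff one_pos).mp hint2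
  norm_num at this

lemma L2 (a : ℝ) {c : ℝ} (hc : 0 < c) :
    ∫⁻ x in Ioc a (a+1), ENNReal.ofReal (c / (x - a)) = ⊤ := by
  have hmp := measurePreserving_add_right (volume : Measure ℝ) a
  have emb : MeasurableEmbedding (fun x : ℝ => x + a) :=
    (MeasurableEquiv.addRight a).measurableEmbedding
  have := hmp.setLIntegral_comp_preimage_emb emb
    (fun x => ENNReal.ofReal (c / (x - a))) (Ioc a (a+1))
  have hpre : (fun x : ℝ => x + a) ⁻¹' Ioc a (a+1) = Ioc 0 1 := by
    ext x; simp only [Set.mem_preimage, Set.mem_Ioc]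
    constructor <;> (intro h; exact ⟨by linarith [h.1, h.2], by linarith [h.1, h.2]⟩)
  rw [hpre] at this
  rw [← this]
  simpa using L1 hc

lemma L3 (a : ℝ) {c : ℝ} (hc : 0 < c) :
    ∫⁻ x in Ico (a-1) a, ENNReal.ofReal (c / (a - x)) = ⊤ := by
  have hmp := Measure.measurePreserving_sub_left (volume : Measure ℝ) a
  have emb : MeasurableEmbedding (fun x : ℝ => a - x) := by
    have : (fun x : ℝ => a - x) = (fun x : ℝ => x + a) ∘ (fun x : ℝ => -x) := by
      ext x; simp [sub_eq_neg_add, add_comm]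
    rw [this]
    exact (MeasurableEquiv.addRight a).measurableEmbedding.comp
      (MeasurableEquiv.neg ℝ).measurableEmbedding
  have := hmp.setLIntegral_comp_preimage_emb emb
    (fun x => ENNReal.ofReal (c / (a - x))) (Ico (a-1) a)
  have hpre : (fun x : ℝ => a - x) ⁻¹' Ico (a-1) a = Ioc 0 1 := by
    ext x; simp only [Set.mem_preimage, Set.mem_Ioc, Set.mem_Ico]
    constructor <;> (intro h; exact ⟨by linarith [h.1, h.2], by linarith [h.1, h.2]⟩)
  rw [hpre] at this
  rw [← this]
  have : ∀ x : ℝ, a - (a - x) = x := fun x => by ring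
  simp only [this]
  exact L1 hc
open scoped Real
-- helper: periodicity of exp(Iθ)
lemma aux_exp_period (θ : ℝ) :
    ∃ θ' ∈ Set.Icc (-π) π, Complex.exp (Complex.I * θ') = Complex.exp (Complex.I * θ) := by
  have h2π : (0:ℝ) < 2 * π := by positivity
  refine ⟨toIocMod h2π (-π) θ, ?_, ?_⟩
  · have h := toIocMod_mem_Ioc h2π (-π) θ
    exact ⟨h.1.le, by linarith [h.2]⟩
  · rw [Complex.exp_eq_exp_iff_exists_int]
    refine ⟨-(toIocDiv h2π (-π) θ), ?_⟩
    have : toIocMod h2π (-π) θ = θ - (toIocDiv h2π (-π) θ : ℤ) • (2*π) := rfl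
    rw [this]
    push_cast [zsmul_eq_mul]
    ring

lemma aux_inj_exp : Set.InjOn (fun θ : ℝ => Complex.exp (Complex.I * θ)) (Set.Ioc (-π) π) := by
  intro x hx y hy hxy
  simp only at hxy
  rw [Complex.exp_eq_exp_iff_exists_int] at hxy
  obtain ⟨n, hn⟩ := hxy
  have h2 : Complex.I * (x:ℂ) = Complex.I * ((y + n * (2*π) : ℝ) : ℂ) := by
    rw [hn]; push_cast; ring
  have h3 : x = y + n * (2*π) := by exact_mod_cast mul_left_cancel₀ Complex.I_ne_zero h2
  have hn0 : n = 0 := by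
    rcases lt_trichotomy n 0 with h | h | h
    · exfalso
      have : (n:ℝ) ≤ -1 := by exact_mod_cast Int.le_sub_one_of_lt h
      nlinarith [Real.pi_pos, hx.1, hx.2, hy.1, hy.2]
    · exact h
    · exfalso
      have : (1:ℝ) ≤ n := by exact_mod_cast h
      nlinarith [Real.pi_pos, hx.1, hx.2, hy.1, hy.2]
  rw [hn0] at h3
  simpa using h3

lemma aux_contDiff_eval (P : Polynomial ℂ) :
    ContDiff ℝ 1 (fun θ : ℝ => P.eval (Complex.exp (Complex.I * θ))) := by
  have he : ContDiff ℝ 1 (fun θ : ℝ => Complex.exp (Complex.I * θ)) := by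
    apply Complex.contDiff_exp.comp
    exact contDiff_const.mul Complex.ofRealCLM.contDiff
  have hp : ContDiff ℝ 1 (fun z : ℂ => P.eval z) := by
    have h : (fun z : ℂ => P.eval z)
        = fun z => ∑ k ∈ Finset.range (P.natDegree + 1), P.coeff k * z ^ k := by
      funext z; rw [Polynomial.eval_eq_sum_range]
    rw [h]
    exact ContDiff.sum fun k _ => contDiff_const.mul (contDiff_id.pow k)
  exact hp.comp he

lemma key {m : ℕ} {A : Matrix (Fin m) (Fin m) ℂ} (hA : A.PosSemidef) (hdet : A.det ≠ 0)
    (v : Fin m → ℂ) :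
    (star v ⬝ᵥ v).re ≤ (A⁻¹.trace).re * (star v ⬝ᵥ (A *ᵥ v)).re := by
  classical
  have hH : A.IsHermitian := hA.1
  set ev := hH.eigenvalues with hev
  have hdet' : A.det = ∏ i, ((ev i : ℂ)) := hH.det_eq_prod_eigenvalues
  have hne : ∀ i, (ev i : ℂ) ≠ 0 := by
    intro i
    intro h
    apply hdet
    rw [hdet']
    exact Finset.prod_eq_zero (Finset.mem_univ i) h
  have hpos : ∀ i, 0 < ev i := by
    intro i
    rcases lt_or_eq_of_le (hA.eigenvalues_nonneg i) with h | h
    · exact h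
    · exact absurd (by exact_mod_cast h.symm : (ev i : ℂ) = 0) (hne i)
  set U : Matrix (Fin m) (Fin m) ℂ := (hH.eigenvectorUnitary : Matrix (Fin m) (Fin m) ℂ) with hUdef
  have hU1 : U * star U = 1 := mem_unitaryGroup_iff.mp hH.eigenvectorUnitary.2
  have hU2 : star U * U = 1 := mem_unitaryGroup_iff'.mp hH.eigenvectorUnitary.2
  set d : Fin m → ℂ := RCLike.ofReal ∘ ev with hd
  have hspec : A = U * diagonal d * star U := hH.spectral_theorem
  have hdinv : diagonal d * diagonal d⁻¹ = 1 := by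
    rw [diagonal_mul_diagonal]
    have : (fun i => d i * d⁻¹ i) = fun _ => (1:ℂ) := funext fun i => by
      have hdne : d i ≠ 0 := by simpa [hd, RCLike.ofReal] using hne i
      simp [mul_inv_cancel₀ hdne]
    rw [this]
    exact Matrix.diagonal_one
  have hAinv : A⁻¹ = U * diagonal d⁻¹ * star U := by
    apply inv_eq_right_inv
    rw [hspec]
    calc U * diagonal d * star U * (U * diagonal d⁻¹ * star U)
        = U * (diagonal d * ((star U * U) * (diagonal d⁻¹ * star U))) := by
          simp only [Matrix.mul_assoc]
      _ = U * ((diagonal d * diagonal d⁻¹) * star U) := by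
          rw [hU2, Matrix.one_mul, Matrix.mul_assoc]
      _ = 1 := by rw [hdinv, Matrix.one_mul, hU1]
  have htr : (A⁻¹.trace).re = ∑ i, (ev i)⁻¹ := by
    rw [hAinv, trace_mul_cycle, hU2, Matrix.one_mul, trace_diagonal]
    rw [Complex.re_sum]
    refine Finset.sum_congr rfl fun i _ => ?_
    simp [hd, RCLike.ofReal]
  set w : Fin m → ℂ := star U *ᵥ v with hwdef
  have hw1 : star v ᵥ* U = star w := by
    rw [hwdef, star_mulVec, Matrix.star_eq_conjTranspose, conjTranspose_conjTranspose]
  have hq : (star v ⬝ᵥ (A *ᵥ v)).re = ∑ i, ev i * Complex.normSq (w i) := by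
    conv_lhs => rw [hspec, ← mulVec_mulVec, ← mulVec_mulVec, dotProduct_mulVec, hw1]
    rw [show star w ⬝ᵥ (diagonal d *ᵥ w) = ∑ i, (starRingEnd ℂ) (w i) * (d i * w i) by
      simp [dotProduct, mulVec_diagonal, Pi.star_apply, RCLike.star_def]]
    rw [Complex.re_sum]
    refine Finset.sum_congr rfl fun i _ => ?_
    have : (starRingEnd ℂ) (w i) * (d i * w i) = (ev i : ℂ) * (Complex.normSq (w i) : ℂ) := by
      have hdi : d i = ((ev i : ℝ) : ℂ) := by simp [hd, RCLike.ofReal]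
      rw [hdi]
      rw [show (starRingEnd ℂ) (w i) * (((ev i : ℝ) : ℂ) * w i)
          = ((ev i : ℝ) : ℂ) * ((starRingEnd ℂ) (w i) * w i) by ring]
      congr 1
      rw [mul_comm, Complex.mul_conj]
    rw [this]
    push_cast
    simp
  have hUw : U *ᵥ w = v := by
    rw [hwdef, mulVec_mulVec, hU1, one_mulVec]
  have hn : (star v ⬝ᵥ v).re = ∑ i, Complex.normSq (w i) := by
    have h1 : star v ⬝ᵥ v = star w ⬝ᵥ w := by
      calc star v ⬝ᵥ v = star (U *ᵥ w) ⬝ᵥ (U *ᵥ w) := by rw [hUw]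
        _ = (star w ᵥ* Uᴴ) ⬝ᵥ (U *ᵥ w) := by rw [star_mulVec]
        _ = ((star w ᵥ* Uᴴ) ᵥ* U) ⬝ᵥ w := by rw [dotProduct_mulVec]
        _ = (star w ᵥ* (Uᴴ * U)) ⬝ᵥ w := by rw [vecMul_vecMul]
        _ = star w ⬝ᵥ w := by
            rw [← Matrix.star_eq_conjTranspose, hU2, vecMul_one]
    rw [h1]
    rw [show star w ⬝ᵥ w = ∑ i, (starRingEnd ℂ) (w i) * w i by
      simp [dotProduct, Pi.star_apply, RCLike.star_def]]
    rw [Complex.re_sum]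
    refine Finset.sum_congr rfl fun i _ => ?_
    rw [mul_comm, Complex.mul_conj]
    simp
  -- the real Cauchy–Schwarz step
  rw [hn, hq, htr]
  set nn : Fin m → ℝ := fun i => Complex.normSq (w i) with hnn
  have hnn0 : ∀ i, 0 ≤ nn i := fun i => Complex.normSq_nonneg _
  have hsq : ∀ i : Fin m, Real.sqrt (ev i) * Real.sqrt (nn i)
      * Real.sqrt ((ev i)⁻¹) = Real.sqrt (nn i) := by
    intro i
    rw [Real.sqrt_inv]
    have h1 : Real.sqrt (ev i) * (Real.sqrt (ev i))⁻¹ = 1 := by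
      have : (0:ℝ) < Real.sqrt (ev i) := Real.sqrt_pos.2 (hpos i)
      exact mul_inv_cancel₀ this.ne'
    calc Real.sqrt (ev i) * Real.sqrt (nn i) * (Real.sqrt (ev i))⁻¹
        = (Real.sqrt (ev i) * (Real.sqrt (ev i))⁻¹) * Real.sqrt (nn i) := by ring
      _ = Real.sqrt (nn i) := by rw [h1, one_mul]
  have CS := Finset.sum_mul_sq_le_sq_mul_sq Finset.univ
    (fun i => Real.sqrt (ev i) * Real.sqrt (nn i))
    (fun i => Real.sqrt ((ev i)⁻¹))
  simp only [hsq] at CS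
  have hf2 : ∀ i : Fin m, (Real.sqrt (ev i) * Real.sqrt (nn i)) ^ 2 = ev i * nn i := by
    intro i
    rw [mul_pow, Real.sq_sqrt (hpos i).le, Real.sq_sqrt (hnn0 i)]
  have hg2 : ∀ i : Fin m, (Real.sqrt ((ev i)⁻¹)) ^ 2 = (ev i)⁻¹ := by
    intro i
    rw [Real.sq_sqrt (inv_nonneg.2 (hpos i).le)]
  simp only [hf2, hg2] at CS
  have hstep : ∑ i, nn i ≤ (∑ i, Real.sqrt (nn i)) ^ 2 := by
    have := Finset.sum_sq_le_sq_sum_of_nonneg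
      (f := fun i => Real.sqrt (nn i)) (s := Finset.univ)
      (fun i _ => Real.sqrt_nonneg _)
    simpa only [Real.sq_sqrt (hnn0 _)] using this
  calc Finset.univ.sum nn ≤ (∑ i, Real.sqrt (nn i)) ^ 2 := hstep
    _ ≤ (∑ i, ev i * nn i) * ∑ i, (ev i)⁻¹ := CS
    _ = (∑ i, (ev i)⁻¹) * ∑ i, ev i * nn i := mul_comm _ _
end aux

/-- Divergence of the trace of the inverse at the boundary: if
`M : [-π,π] → ℂ^{m×m}` has entries rational in `e^{iθ}`, is Hermitian positive
semidefinite everywhere, is singular at some point, and `det M` is not identically zero,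
then `M(θ)` is invertible for all but finitely many `θ ∈ [-π,π]` and
`∫ tr(M(θ)⁻¹) dθ = +∞`. -/
theorem stmt10 (m : ℕ) (hm : 1 ≤ m)
    (M : ℝ → Matrix (Fin m) (Fin m) ℂ)
    (hrat : ∀ i j : Fin m, ∃ p q : Polynomial ℂ,
      (∀ θ ∈ Set.Icc (-π) π, q.eval (Complex.exp (Complex.I * (θ : ℂ))) ≠ 0) ∧
      ∀ θ ∈ Set.Icc (-π) π,
        M θ i j = p.eval (Complex.exp (Complex.I * (θ : ℂ)))
          / q.eval (Complex.exp (Complex.I * (θ : ℂ))))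
    (hpsd : ∀ θ ∈ Set.Icc (-π) π, (M θ).PosSemidef)
    (hsing : ∃ θ₀ ∈ Set.Icc (-π) π, (M θ₀).det = 0)
    (hnotzero : ∃ θ₁ ∈ Set.Icc (-π) π, (M θ₁).det ≠ 0) :
    {θ ∈ Set.Icc (-π) π | (M θ).det = 0}.Finite ∧
    ∫⁻ θ in Set.Icc (-π) π, ENNReal.ofReal (((M θ)⁻¹).trace.re) = ⊤ := by
  classical
  obtain ⟨θ₀, hθ₀, hdet0⟩ := hsing
  obtain ⟨θ₁, hθ₁, hdet1⟩ := hnotzero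
  choose p q hq hpq using hrat
  set z : ℝ → ℂ := fun θ => Complex.exp (Complex.I * θ) with hz
  have hqg : ∀ (i j : Fin m) (θ : ℝ), (q i j).eval (z θ) ≠ 0 := by
    intro i j θ
    obtain ⟨θ', hθ', he⟩ := aux_exp_period θ
    rw [hz]
    simp only
    rw [← he]
    exact hq i j θ' hθ'
  -- determinant polynomial
  set N : Matrix (Fin m) (Fin m) (Polynomial ℂ) :=
    Matrix.of fun i j => p i j * ∏ ij ∈ Finset.univ.erase (i, j), q ij.1 ij.2 with hN
  set D : Polynomial ℂ := N.det with hD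
  set Qt : Polynomial ℂ := ∏ ij : Fin m × Fin m, q ij.1 ij.2 with hQt
  have hQtne : ∀ θ : ℝ, Qt.eval (z θ) ≠ 0 := by
    intro θ
    rw [hQt, Polynomial.eval_prod]
    exact Finset.prod_ne_zero_iff.2 fun ij _ => hqg ij.1 ij.2 θ
  have hMeq : ∀ θ ∈ Set.Icc (-π) π,
      M θ = (Qt.eval (z θ))⁻¹ • N.map (fun P => P.eval (z θ)) := by
    intro θ hθ
    ext i j
    simp only [Matrix.smul_apply, Matrix.map_apply, hN, Matrix.of_apply, smul_eq_mul]
    rw [hpq i j θ hθ, hQt]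
    simp only [Polynomial.eval_mul, Polynomial.eval_prod]
    have hfull : ∏ ij : Fin m × Fin m, (q ij.1 ij.2).eval (z θ)
        = (q i j).eval (z θ) * ∏ ij ∈ Finset.univ.erase (i,j), (q ij.1 ij.2).eval (z θ) :=
      (Finset.mul_prod_erase Finset.univ _ (Finset.mem_univ (i,j))).symm
    rw [hfull]
    have hB : ∏ ij ∈ Finset.univ.erase (i,j), (q ij.1 ij.2).eval (z θ) ≠ 0 :=
      Finset.prod_ne_zero_iff.2 fun ij _ => hqg ij.1 ij.2 θ
    have hqij := hqg i j θ
    rw [mul_inv]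
    field_simp
    simp only [hz]
    have hqij' : (q i j).eval (Complex.exp (Complex.I * θ)) ≠ 0 := hqij
    field_simp
  have hdetEq : ∀ θ ∈ Set.Icc (-π) π,
      (M θ).det = ((Qt.eval (z θ))⁻¹)^m * D.eval (z θ) := by
    intro θ hθ
    rw [hMeq θ hθ, Matrix.det_smul]
    congr 1
    · simp
    · rw [hD]
      have : N.map (fun P => P.eval (z θ)) = N.map (Polynomial.evalRingHom (z θ)) := by
        simp [Polynomial.coe_evalRingHom]
      rw [this,
        show N.map ⇑(Polynomial.evalRingHom (z θ)) = (Polynomial.evalRingHom (z θ)).mapMatrix N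
          from rfl, ← RingHom.map_det]
      simp [Polynomial.coe_evalRingHom]
  have hDne : D ≠ 0 := by
    intro h
    apply hdet1
    rw [hdetEq θ₁ hθ₁, h]
    simp
  -- finiteness
  have hBsub : {θ ∈ Set.Icc (-π) π | (M θ).det = 0}
      ⊆ {θ ∈ Set.Icc (-π) π | D.IsRoot (z θ)} := by
    rintro θ ⟨hθ, hθdet⟩
    refine ⟨hθ, ?_⟩
    have := hdetEq θ hθ
    rw [hθdet] at this
    have hne : ((Qt.eval (z θ))⁻¹)^m ≠ 0 := pow_ne_zero _ (inv_ne_zero (hQtne θ))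
    rcases mul_eq_zero.1 this.symm with h | h
    · exact absurd h hne
    · exact h
  have hroots : {θ ∈ Set.Icc (-π) π | D.IsRoot (z θ)}.Finite := by
    have hfin : {x : ℂ | D.IsRoot x}.Finite := Polynomial.finite_setOf_isRoot hDne
    set S := {θ ∈ Set.Icc (-π) π | D.IsRoot (z θ)} with hS
    have hA : (S ∩ Set.Ioc (-π) π).Finite := by
      apply Set.Finite.of_finite_image (f := z)
      · exact hfin.subset (by rintro x ⟨θ, hθ, rfl⟩; exact hθ.1.2)
      · exact aux_inj_exp.mono (Set.inter_subset_right)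
    have hsub : S ⊆ insert (-π) (S ∩ Set.Ioc (-π) π) := by
      intro θ hθ
      rcases eq_or_lt_of_le hθ.1.1 with h | h
      · exact Set.mem_insert_iff.2 (Or.inl h.symm)
      · exact Set.mem_insert_iff.2 (Or.inr ⟨hθ, h, hθ.1.2⟩)
    exact (hA.insert _).subset hsub
  have hBfin : {θ ∈ Set.Icc (-π) π | (M θ).det = 0}.Finite := hroots.subset hBsub
  refine ⟨hBfin, ?_⟩
  set B := {θ ∈ Set.Icc (-π) π | (M θ).det = 0} with hBdef
  have hθ₀B : θ₀ ∈ B := ⟨hθ₀, hdet0⟩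
  have hBnull : volume B = 0 := hBfin.measure_zero volume
  -- null vector at θ₀
  obtain ⟨v, hv0, hMv⟩ := (Matrix.exists_mulVec_eq_zero_iff).2 hdet0
  set c₀ := (star v ⬝ᵥ v).re with hc₀def
  have hc₀ : 0 < c₀ := by
    have hsum : c₀ = ∑ i, Complex.normSq (v i) := by
      rw [hc₀def, show star v ⬝ᵥ v = ∑ i, (starRingEnd ℂ) (v i) * v i by
        simp [dotProduct, Pi.star_apply, RCLike.star_def]]
      rw [Complex.re_sum]
      refine Finset.sum_congr rfl fun i _ => ?_
      rw [mul_comm, Complex.mul_conj]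
      simp
    obtain ⟨i, hi⟩ := Function.ne_iff.1 hv0
    rw [hsum]
    exact Finset.sum_pos' (fun i _ => Complex.normSq_nonneg _)
      ⟨i, Finset.mem_univ i, Complex.normSq_pos.2 hi⟩
  -- the Lipschitz function
  set f : ℝ → ℂ := fun θ => ∑ i, star (v i) * ∑ j,
    (p i j).eval (z θ) / (q i j).eval (z θ) * v j with hfdef
  have hfM : ∀ θ ∈ Set.Icc (-π) π, star v ⬝ᵥ (M θ *ᵥ v) = f θ := by
    intro θ hθ
    rw [hfdef]
    simp only [dotProduct, Matrix.mulVec, Pi.star_apply]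
    refine Finset.sum_congr rfl fun i _ => ?_
    congr 1
    refine Finset.sum_congr rfl fun j _ => ?_
    rw [hpq i j θ hθ]
  have hf0 : f θ₀ = 0 := by
    rw [← hfM θ₀ hθ₀, hMv, dotProduct_zero]
  have hcd : ContDiff ℝ 1 f := by
    rw [hfdef]
    simp only [div_eq_mul_inv]
    refine ContDiff.sum fun i _ => ContDiff.mul contDiff_const ?_
    refine ContDiff.sum fun j _ => ContDiff.mul ?_ contDiff_const
    exact (aux_contDiff_eval (p i j)).mul
      ((aux_contDiff_eval (q i j)).inv (fun θ => hqg i j θ))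
  obtain ⟨C, hC⟩ := (isCompact_Icc (a := -π) (b := π)).exists_bound_of_continuousOn
    (hcd.continuous_deriv le_rfl).continuousOn
  set C1 := max C 1 with hC1def
  have hC1 : 0 < C1 := lt_of_lt_of_le one_pos (le_max_right _ _)
  have hlip : ∀ θ ∈ Set.Icc (-π) π, ‖f θ - f θ₀‖ ≤ C1 * |θ - θ₀| := by
    intro θ hθ
    have := (convex_Icc (-π) π).norm_image_sub_le_of_norm_deriv_le (f := f) (C := C1)
      (fun x _ => (hcd.differentiable one_ne_zero).differentiableAt)
      (fun x hx => le_trans (hC x hx) (le_max_left _ _))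
      hθ₀ hθ
    simpa [Real.norm_eq_abs] using this
  have hsle : ∀ θ ∈ Set.Icc (-π) π, (star v ⬝ᵥ (M θ *ᵥ v)).re ≤ C1 * |θ - θ₀| := by
    intro θ hθ
    calc (star v ⬝ᵥ (M θ *ᵥ v)).re ≤ ‖f θ‖ := by
          rw [hfM θ hθ]
          exact Complex.re_le_norm _
      _ = ‖f θ - f θ₀‖ := by rw [hf0, sub_zero]
      _ ≤ C1 * |θ - θ₀| := hlip θ hθ
  have hmain : ∀ θ ∈ Set.Icc (-π) π, θ ∉ B →
      c₀ / (C1 * |θ - θ₀|) ≤ ((M θ)⁻¹).trace.re := by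
    intro θ hθ hnB
    have hdet : (M θ).det ≠ 0 := fun h => hnB ⟨hθ, h⟩
    have hkey := key (hpsd θ hθ) hdet v
    have hs0 : 0 ≤ (star v ⬝ᵥ (M θ *ᵥ v)).re := by
      have := (hpsd θ hθ).re_dotProduct_nonneg v
      simpa using this
    have hspos : 0 < (star v ⬝ᵥ (M θ *ᵥ v)).re := by
      rcases hs0.lt_or_eq with h | h
      · exact h
      · exfalso; rw [← h] at hkey; simp at hkey; linarith
    have h1 : c₀ / (star v ⬝ᵥ (M θ *ᵥ v)).re ≤ ((M θ)⁻¹).trace.re :=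
      (div_le_iff₀ hspos).2 hkey
    refine le_trans ?_ h1
    gcongr
    exact hsle θ hθ
  -- integral divergence
  have hπ : (3:ℝ) < π := Real.pi_gt_three
  have hae_nB : ∀ᵐ θ ∂(volume : Measure ℝ), θ ∉ B := by
    rw [MeasureTheory.ae_iff]
    simpa using hBnull
  rcases le_or_gt θ₀ 0 with hcase | hcase
  · -- right interval
    set J := Set.Ioc θ₀ (θ₀ + 1) with hJ
    have hJsub : J ⊆ Set.Icc (-π) π := by
      intro θ hθ
      exact ⟨by linarith [hθ.1, hθ₀.1], by linarith [hθ.2]⟩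
    have hae : ∀ᵐ θ ∂(volume.restrict J),
        ENNReal.ofReal ((c₀ / C1) / (θ - θ₀)) ≤ ENNReal.ofReal (((M θ)⁻¹).trace.re) := by
      filter_upwards [ae_restrict_of_ae hae_nB, ae_restrict_mem measurableSet_Ioc]
        with θ hnB hJθ
      have hθI := hJsub hJθ
      have h := hmain θ hθI hnB
      rw [abs_of_pos (by linarith [hJθ.1]), ← div_div] at h
      exact ENNReal.ofReal_le_ofReal h
    have hdiv : ∫⁻ θ in J, ENNReal.ofReal ((c₀ / C1) / (θ - θ₀)) = ⊤ :=
      L2 θ₀ (div_pos hc₀ hC1)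
    refine top_le_iff.1 ?_
    calc (⊤:ENNReal) = ∫⁻ θ in J, ENNReal.ofReal ((c₀ / C1) / (θ - θ₀)) := hdiv.symm
      _ ≤ ∫⁻ θ in J, ENNReal.ofReal (((M θ)⁻¹).trace.re) := lintegral_mono_ae hae
      _ ≤ ∫⁻ θ in Set.Icc (-π) π, ENNReal.ofReal (((M θ)⁻¹).trace.re) :=
          lintegral_mono_set hJsub
  · -- left interval
    set J := Set.Ico (θ₀ - 1) θ₀ with hJ
    have hJsub : J ⊆ Set.Icc (-π) π := by
      intro θ hθ
      exact ⟨by nlinarith [hθ.1], by linarith [hθ.2, hθ₀.2]⟩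
    have hae : ∀ᵐ θ ∂(volume.restrict J),
        ENNReal.ofReal ((c₀ / C1) / (θ₀ - θ)) ≤ ENNReal.ofReal (((M θ)⁻¹).trace.re) := by
      filter_upwards [ae_restrict_of_ae hae_nB, ae_restrict_mem measurableSet_Ico]
        with θ hnB hJθ
      have hθI := hJsub hJθ
      have h := hmain θ hθI hnB
      rw [abs_of_neg (by linarith [hJθ.2]), neg_sub, ← div_div] at h
      exact ENNReal.ofReal_le_ofReal h
    have hdiv : ∫⁻ θ in J, ENNReal.ofReal ((c₀ / C1) / (θ₀ - θ)) = ⊤ :=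
      L3 θ₀ (div_pos hc₀ hC1)
    refine top_le_iff.1 ?_
    calc (⊤:ENNReal) = ∫⁻ θ in J, ENNReal.ofReal ((c₀ / C1) / (θ₀ - θ)) := hdiv.symm
      _ ≤ ∫⁻ θ in J, ENNReal.ofReal (((M θ)⁻¹).trace.re) := lintegral_mono_ae hae
      _ ≤ ∫⁻ θ in Set.Icc (-π) π, ENNReal.ofReal (((M θ)⁻¹).trace.re) :=
          lintegral_mono_set hJsub
end

section
/- A nonnegative rational trigonometric function with a zero has non-integrable reciprocal: let p, q be complex polynomials with q(e^{iθ}) ≠ 0 for all θ ∈ [-π,π], and set r(θ) = p(e^{iθ})/q(e^{iθ}). Assume r(θ) is real and r(θ) ≥ 0 for every θ, r(θ_0) = 0 for some θ_0 ∈ [-π,π], and r is not identically zero. Then ∫_{-π}^{π} 1/r(θ) dθ = +∞ (as a Lebesgue integral of the nonnegative function 1/r over the set where r(θ) > 0). -/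
open MeasureTheory
open scoped Real ContDiff

/-- Fibers of `θ ↦ exp(Iθ)` are countable. -/
lemma aux_countable_exp_fiber (z : ℂ) :
    {θ : ℝ | Complex.exp (Complex.I * θ) = z}.Countable := by
  rcases Set.eq_empty_or_nonempty {θ : ℝ | Complex.exp (Complex.I * θ) = z} with hE | ⟨θa, hθa⟩
  · simp [hE]
  · have hsub : {θ : ℝ | Complex.exp (Complex.I * θ) = z} ⊆
        Set.range (fun n : ℤ => θa + n * (2 * π)) := by
      intro θ hθ
      have hez : Complex.exp (Complex.I * θ) = Complex.exp (Complex.I * θa) := by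
        rw [hθ, hθa]
      obtain ⟨n, hn⟩ := Complex.exp_eq_exp_iff_exists_int.mp hez
      refine ⟨n, ?_⟩
      have hI : (Complex.I : ℂ) * ((θa + (n : ℝ) * (2 * π) : ℝ) : ℂ) = Complex.I * (θ : ℂ) := by
        push_cast
        rw [mul_add]
        rw [hn]
        ring
      have h2 := mul_left_cancel₀ Complex.I_ne_zero hI
      exact_mod_cast h2
    exact Set.Countable.mono hsub (Set.countable_range _)

/-- Divergence of the integral of `1/(θ-a)` near `a`. -/
lemma aux_inv_lintegral_top (a δ : ℝ) (hδ : 0 < δ) :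
    ∫⁻ θ in Set.Ioo a (a + δ), ENNReal.ofReal ((θ - a)⁻¹) = ⊤ := by
  by_contra hne
  have hlt : ∫⁻ θ in Set.Ioo a (a + δ), ENNReal.ofReal ((θ - a)⁻¹) < ⊤ :=
    lt_top_iff_ne_top.mpr hne
  have hmeas : AEStronglyMeasurable (fun θ : ℝ => (θ - a)⁻¹)
      (volume.restrict (Set.Ioo a (a + δ))) :=
    ((measurable_id.sub_const a).inv).aestronglyMeasurable
  have hnn : 0 ≤ᵐ[volume.restrict (Set.Ioo a (a + δ))] (fun θ : ℝ => (θ - a)⁻¹) := by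
    filter_upwards [ae_restrict_mem measurableSet_Ioo] with θ hθ
    have : 0 < θ - a := by linarith [hθ.1]
    positivity
  have hint : IntegrableOn (fun θ : ℝ => (θ - a)⁻¹) (Set.Ioo a (a + δ)) :=
    ⟨hmeas, (hasFiniteIntegral_iff_ofReal hnn).mpr hlt⟩
  have hioc : IntegrableOn (fun θ : ℝ => (θ - a)⁻¹) (Set.Ioc a (a + δ)) :=
    Iff.mpr integrableOn_Ioc_iff_integrableOn_Ioo hint
  have hii : IntervalIntegrable (fun θ : ℝ => (θ - a)⁻¹) volume a (a + δ) :=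
    (intervalIntegrable_iff_integrableOn_Ioc_of_le (by linarith)).mpr hioc
  rcases intervalIntegrable_sub_inv_iff.mp hii with h | h
  · linarith
  · exact h Set.left_mem_uIcc

/-- Quadratic upper bound at an interior minimum of a smooth nonnegative function. -/
lemma aux_quad_bound {f : ℝ → ℝ} (hf : ContDiff ℝ ∞ f) (hf0 : ∀ θ, 0 ≤ f θ)
    {θc : ℝ} (hθc : f θc = 0) :
    ∃ M : ℝ, 1 ≤ M ∧ ∀ θ ∈ Set.Icc (θc - 1) (θc + 1), f θ ≤ M * (θ - θc) ^ 2 := by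
  have hfd : Differentiable ℝ f := (contDiff_infty_iff_deriv.mp hf).1
  have hf1_cd : ContDiff ℝ ∞ (deriv f) := (contDiff_infty_iff_deriv.mp hf).2
  have hf1d : Differentiable ℝ (deriv f) := (contDiff_infty_iff_deriv.mp hf1_cd).1
  have hf2c : Continuous (deriv (deriv f)) :=
    ((contDiff_infty_iff_deriv.mp hf1_cd).2).continuous
  have hmin : IsLocalMin f θc := Filter.Eventually.of_forall (fun θ => hθc ▸ hf0 θ)
  have hderiv0 : deriv f θc = 0 := hmin.deriv_eq_zero
  obtain ⟨M0, hM0⟩ := (isCompact_Icc : IsCompact (Set.Icc (θc - 1) (θc + 1))).exists_bound_of_continuousOn hf2c.continuousOn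
  refine ⟨max M0 1, le_max_right _ _, ?_⟩
  set M := max M0 1 with hM_def
  have hMpos : (0:ℝ) < M := lt_of_lt_of_le one_pos (le_max_right _ _)
  have hM : ∀ s ∈ Set.Icc (θc - 1) (θc + 1), ‖deriv (deriv f) s‖ ≤ M :=
    fun s hs => le_trans (hM0 s hs) (le_max_left _ _)
  have θcK : θc ∈ Set.Icc (θc - 1) (θc + 1) := by
    constructor <;> linarith
  have hstepA : ∀ s ∈ Set.Icc (θc - 1) (θc + 1), |deriv f s| ≤ M * |s - θc| := by
    intro s hs
    have h := (convex_Icc (θc - 1) (θc + 1)).norm_image_sub_le_of_norm_deriv_le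
      (fun x _ => hf1d x) hM θcK hs
    rw [hderiv0, sub_zero, Real.norm_eq_abs, Real.norm_eq_abs] at h
    exact h
  intro θ hθ
  have hseg : segment ℝ θc θ ⊆ Set.Icc (θc - 1) (θc + 1) :=
    (convex_Icc _ _).segment_subset θcK hθ
  have hbound : ∀ x ∈ segment ℝ θc θ, ‖deriv f x‖ ≤ M * |θ - θc| := by
    intro x hx
    have h1 : |x - θc| ≤ |θ - θc| := by
      rw [segment_eq_uIcc] at hx
      rcases le_total θc θ with h | h
      · rw [Set.uIcc_of_le h] at hx
        rw [abs_of_nonneg (by linarith [hx.1]), abs_of_nonneg (by linarith)]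
        linarith [hx.2]
      · rw [Set.uIcc_of_ge h] at hx
        rw [abs_of_nonpos (by linarith [hx.2]), abs_of_nonpos (by linarith)]
        linarith [hx.1]
    calc ‖deriv f x‖ = |deriv f x| := rfl
      _ ≤ M * |x - θc| := hstepA x (hseg hx)
      _ ≤ M * |θ - θc| := by nlinarith
  have h := (convex_segment θc θ).norm_image_sub_le_of_norm_deriv_le
    (fun x _ => hfd x) hbound (left_mem_segment ℝ θc θ) (right_mem_segment ℝ θc θ)
  rw [hθc, sub_zero, Real.norm_eq_abs, Real.norm_eq_abs] at h
  calc f θ ≤ |f θ| := le_abs_self _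
    _ ≤ M * |θ - θc| * |θ - θc| := h
    _ = M * (θ - θc) ^ 2 := by rw [mul_assoc, ← abs_mul, ← sq, abs_sq]

/-- A nonnegative rational trigonometric function with a zero has
non-integrable reciprocal: if `r(θ) = p(e^{iθ})/q(e^{iθ})` is real and nonnegative on
`[-π,π]`, vanishes at some point, and is not identically zero, then
`∫ 1/r(θ) dθ = +∞`. -/
theorem stmt11 (p q : Polynomial ℂ)
    (hq : ∀ θ ∈ Set.Icc (-π) π, q.eval (Complex.exp (Complex.I * (θ : ℂ))) ≠ 0)
    (r : ℝ → ℂ)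
    (hr : ∀ θ ∈ Set.Icc (-π) π,
      r θ = p.eval (Complex.exp (Complex.I * (θ : ℂ)))
        / q.eval (Complex.exp (Complex.I * (θ : ℂ))))
    (hreal : ∀ θ ∈ Set.Icc (-π) π, (r θ).im = 0)
    (hnonneg : ∀ θ ∈ Set.Icc (-π) π, 0 ≤ (r θ).re)
    (hzero : ∃ θ₀ ∈ Set.Icc (-π) π, r θ₀ = 0)
    (hnotzero : ∃ θ₁ ∈ Set.Icc (-π) π, r θ₁ ≠ 0) :
    ∫⁻ θ in Set.Icc (-π) π, ENNReal.ofReal (1 / (r θ).re) = ⊤ := by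
  have two_pi_pos : (0:ℝ) < 2 * π := by positivity
  -- basic periodicity
  have he_int : ∀ (n : ℤ) (θ : ℝ),
      Complex.exp (Complex.I * ((θ + n * (2 * π) : ℝ) : ℂ)) =
        Complex.exp (Complex.I * (θ : ℂ)) := by
    intro n θ
    have harg : (Complex.I * ((θ + (n:ℝ) * (2 * π) : ℝ) : ℂ)) =
        Complex.I * (θ:ℂ) + (n:ℂ) * (2 * π * Complex.I) := by
      push_cast; ring
    rw [harg, Complex.exp_add, Complex.exp_int_mul_two_pi_mul_I, mul_one]
  -- reduction to the fundamental domain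
  have hmem : ∀ θ : ℝ, toIcoMod two_pi_pos (-π) θ ∈ Set.Ico (-π) π := by
    intro θ
    have := toIcoMod_mem_Ico two_pi_pos (-π) θ
    rwa [show -π + 2 * π = π by ring] at this
  have hred : ∀ θ : ℝ,
      Complex.exp (Complex.I * (θ : ℂ)) =
        Complex.exp (Complex.I * ((toIcoMod two_pi_pos (-π) θ : ℝ) : ℂ)) := by
    intro θ
    have h := self_sub_toIcoMod two_pi_pos (-π) θ
    rw [zsmul_eq_mul] at h
    have hθ : θ = toIcoMod two_pi_pos (-π) θ + (toIcoDiv two_pi_pos (-π) θ : ℝ) * (2 * π) := by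
      linarith
    have h2 := he_int (toIcoDiv two_pi_pos (-π) θ) (toIcoMod two_pi_pos (-π) θ)
    rw [← hθ] at h2
    exact h2
  have hIcoIcc : Set.Ico (-π) π ⊆ Set.Icc (-π) π := Set.Ico_subset_Icc_self
  -- the globally defined function
  set f : ℝ → ℝ := fun θ =>
    (p.eval (Complex.exp (Complex.I * (θ : ℂ))) /
      q.eval (Complex.exp (Complex.I * (θ : ℂ)))).re with hf_def
  have hq' : ∀ θ : ℝ, q.eval (Complex.exp (Complex.I * (θ : ℂ))) ≠ 0 := by
    intro θ
    rw [hred θ]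
    exact hq _ (hIcoIcc (hmem θ))
  have hf_eq : ∀ θ ∈ Set.Icc (-π) π, f θ = (r θ).re := by
    intro θ hθ
    rw [hf_def, hr θ hθ]
  have hf0 : ∀ θ, 0 ≤ f θ := by
    intro θ
    have h1 : f θ = f (toIcoMod two_pi_pos (-π) θ) := by
      rw [hf_def]; simp only [hred θ]
    rw [h1, hf_eq _ (hIcoIcc (hmem _))]
    exact hnonneg _ (hIcoIcc (hmem _))
  -- the zero point, pushed into [-π, π)
  obtain ⟨θ₀, hθ₀, hrθ₀⟩ := hzero
  set θc := toIcoMod two_pi_pos (-π) θ₀ with hθc_def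
  have hθcIco : θc ∈ Set.Ico (-π) π := hmem θ₀
  have hfθc : f θc = 0 := by
    have h1 : f θ₀ = f θc := by rw [hf_def]; simp only [hred θ₀]; rfl
    rw [← h1, hf_eq θ₀ hθ₀, hrθ₀, Complex.zero_re]
  -- smoothness
  have he_cd : ContDiff ℝ ∞ (fun θ : ℝ => Complex.exp (Complex.I * (θ : ℂ))) := by
    have h1 : ContDiff ℝ ∞ (fun θ : ℝ => Complex.I * (θ : ℂ)) :=
      contDiff_const.mul Complex.ofRealCLM.contDiff
    exact Complex.contDiff_exp.comp h1
  have hpoly : ∀ s : Polynomial ℂ,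
      ContDiff ℝ ∞ (fun θ : ℝ => s.eval (Complex.exp (Complex.I * (θ : ℂ)))) := by
    intro s
    exact ((s.differentiable.contDiff).restrict_scalars ℝ).comp he_cd
  have hdiv_cd : ContDiff ℝ ∞ (fun θ : ℝ =>
      p.eval (Complex.exp (Complex.I * (θ : ℂ))) /
        q.eval (Complex.exp (Complex.I * (θ : ℂ)))) := by
    rw [contDiff_iff_contDiffAt]
    intro θ
    have h1 : ContDiffAt ℂ ∞ (fun z : ℂ => p.eval z / q.eval z)
        (Complex.exp (Complex.I * (θ : ℂ))) :=
      (p.differentiable.contDiff.contDiffAt).div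
        (q.differentiable.contDiff.contDiffAt) (hq' θ)
    exact (h1.restrict_scalars ℝ).comp θ he_cd.contDiffAt
  have hf_cd : ContDiff ℝ ∞ f := by
    rw [hf_def]
    exact (ContinuousLinearMap.contDiff Complex.reCLM).comp hdiv_cd
  -- quadratic bound
  obtain ⟨M, hM1, hquad⟩ := aux_quad_bound hf_cd hf0 hfθc
  have hMpos : (0:ℝ) < M := lt_of_lt_of_le one_pos hM1
  -- the small interval
  set δ := min 1 (π - θc) with hδ_def
  have hδpos : 0 < δ := lt_min one_pos (by linarith [hθcIco.2])
  have hδ1 : δ ≤ 1 := min_le_left _ _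
  have hδ2 : δ ≤ π - θc := min_le_right _ _
  set J := Set.Ioo θc (θc + δ) with hJ_def
  have hJIcc : J ⊆ Set.Icc (-π) π := by
    intro x hx
    exact ⟨by linarith [hθcIco.1, hx.1], by linarith [hx.2]⟩
  have hJK : J ⊆ Set.Icc (θc - 1) (θc + 1) := by
    intro x hx
    exact ⟨by linarith [hx.1], by linarith [hx.2]⟩
  -- the zero set
  have hpne : p ≠ 0 := by
    obtain ⟨θn, hθn, hrn⟩ := hnotzero
    intro hp0
    apply hrn
    rw [hr θn hθn, hp0]
    simp
  set Z : Set ℝ := {θ | p.eval (Complex.exp (Complex.I * (θ : ℂ))) = 0} with hZ_def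
  have hZc : Z.Countable := by
    have hfin : Set.Finite {z : ℂ | p.IsRoot z} := p.finite_setOf_isRoot hpne
    have hsub : Z ⊆ ⋃ z ∈ {z : ℂ | p.IsRoot z},
        {θ : ℝ | Complex.exp (Complex.I * (θ : ℂ)) = z} := by
      intro θ hθ
      exact Set.mem_biUnion hθ rfl
    exact Set.Countable.mono hsub
      (Set.Countable.biUnion hfin.countable (fun z _ => aux_countable_exp_fiber z))
  -- positivity off Z on J
  have hpos : ∀ θ ∈ J, θ ∉ Z → 0 < (r θ).re := by
    intro θ hθJ hθZ
    have hθIcc := hJIcc hθJ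
    rcases lt_or_eq_of_le (hnonneg θ hθIcc) with h | h
    · exact h
    · exfalso
      apply hθZ
      have hr0 : r θ = 0 := Complex.ext (by simpa using h.symm) (by simpa using hreal θ hθIcc)
      rw [hr θ hθIcc] at hr0
      rcases div_eq_zero_iff.mp hr0 with h' | h'
      · exact h'
      · exact absurd h' (hq θ hθIcc)
  -- a.e. lower bound on J
  set c := (M * δ)⁻¹ with hc_def
  have hcpos : 0 < c := by rw [hc_def]; positivity
  have hbound_ae : ∀ᵐ θ ∂(volume.restrict J),
      ENNReal.ofReal c * ENNReal.ofReal ((θ - θc)⁻¹) ≤ ENNReal.ofReal (1 / (r θ).re) := by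
    have hZae : ∀ᵐ θ ∂(volume.restrict J), θ ∉ Z := by
      have h0 : volume.restrict J Z = 0 :=
        le_antisymm (le_trans (Measure.restrict_le_self _) (hZc.measure_zero _).le) zero_le
      exact measure_eq_zero_iff_ae_notMem.mp h0
    filter_upwards [hZae, ae_restrict_mem measurableSet_Ioo] with θ hθZ hθJ
    rw [← ENNReal.ofReal_mul hcpos.le]
    apply ENNReal.ofReal_le_ofReal
    have hθpos : 0 < θ - θc := by linarith [hθJ.1]
    have hrpos := hpos θ hθJ hθZ
    have hub : (r θ).re ≤ M * δ * (θ - θc) := by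
      have h1 : f θ ≤ M * (θ - θc) ^ 2 := hquad θ (hJK hθJ)
      rw [hf_eq θ (hJIcc hθJ)] at h1
      have h2 : θ - θc ≤ δ := by linarith [hθJ.2]
      nlinarith
    rw [one_div]
    have hstep : c * (θ - θc)⁻¹ = (M * δ * (θ - θc))⁻¹ := by
      rw [hc_def, ← mul_inv]
    rw [hstep]
    exact inv_anti₀ hrpos hub
  -- divergence
  have hJ_top : ∫⁻ θ in J, ENNReal.ofReal ((θ - θc)⁻¹) = ⊤ := aux_inv_lintegral_top θc δ hδpos
  have hchain : (⊤ : ENNReal) ≤ ∫⁻ θ in Set.Icc (-π) π, ENNReal.ofReal (1 / (r θ).re) := by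
    calc (⊤ : ENNReal) = ENNReal.ofReal c * ∫⁻ θ in J, ENNReal.ofReal ((θ - θc)⁻¹) := by
          rw [hJ_top, ENNReal.mul_top ((ENNReal.ofReal_pos.mpr hcpos).ne')]
      _ = ∫⁻ θ in J, ENNReal.ofReal c * ENNReal.ofReal ((θ - θc)⁻¹) :=
          (lintegral_const_mul' _ _ ENNReal.ofReal_ne_top).symm
      _ ≤ ∫⁻ θ in J, ENNReal.ofReal (1 / (r θ).re) := lintegral_mono_ae hbound_ae
      _ ≤ ∫⁻ θ in Set.Icc (-π) π, ENNReal.ofReal (1 / (r θ).re) := lintegral_mono_set hJIcc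
  exact top_le_iff.mp hchain
end
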